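/- Let X and Y be metric spaces, equip X × Y with the ℓ² product metric, and let p, q ∈ Y. Suppose there is an infinite family (σᵢ)_{i ∈ ℕ} of geodesics in Y, each joining p to p, such that: (a) for every i and every t ∈ (0,1), σᵢ(t) = q holds if and only if t = 1/2; and (b) for all i ≠ j and all s, t ∈ (0,1), if σᵢ(s) = σⱼ(t) then σᵢ(s) = q. If x, y ∈ X and the configuration ((x, p), (y, p)) is secure in X × Y with finite blocking set B, then the configuration (x, y) is midpoint secure in X, with midpoint blocking set π₁(B). (This abstracts the proof of the paper's Proposition on M × S², where Y is the round 2-sphere, p any point, q its antipodal point, and the σᵢ are simple great circles through p.) -/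

import Mathlib

/-- A map `γ : ℝ → X` (viewed on `[0,1]`) is a geodesic with speed `L` if `L > 0` and
every `t ∈ [0,1]` has a neighborhood `U ⊆ ℝ` on which `γ` is a local isometry up to
the factor `L`: `dist (γ s) (γ s') = L * |s - s'|` for `s, s' ∈ U ∩ [0,1]`. -/
def IsGeodesicWithSpeed {X : Type*} [MetricSpace X] (γ : ℝ → X) (L : ℝ) : Prop :=
  0 < L ∧ ∀ t ∈ Set.Icc (0:ℝ) 1, ∃ U ∈ nhds t,
    ∀ s ∈ U ∩ Set.Icc (0:ℝ) 1, ∀ s' ∈ U ∩ Set.Icc (0:ℝ) 1,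
      dist (γ s) (γ s') = L * |s - s'|

/-- A geodesic is a map with some positive speed. -/
def IsGeodesic {X : Type*} [MetricSpace X] (γ : ℝ → X) : Prop :=
  ∃ L : ℝ, IsGeodesicWithSpeed γ L

/-- `B` is a blocking set for the configuration `(x, y)`: every geodesic joining `x` to `y`
has an interior point in `B`. -/
def Blocks {X : Type*} [MetricSpace X] (x y : X) (B : Set X) : Prop :=
  ∀ γ : ℝ → X, IsGeodesic γ → γ 0 = x → γ 1 = y → ∃ t ∈ Set.Ioo (0:ℝ) 1, γ t ∈ B

/-- The configuration `(x, y)` is secure: it has a finite blocking set. -/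
def Secure {X : Type*} [MetricSpace X] (x y : X) : Prop :=
  ∃ B : Set X, B.Finite ∧ Blocks x y B

/-- `B` is a midpoint blocking set for `(x, y)`: every geodesic joining `x` to `y`
has its midpoint in `B`. -/
def MidpointBlocks {X : Type*} [MetricSpace X] (x y : X) (B : Set X) : Prop :=
  ∀ γ : ℝ → X, IsGeodesic γ → γ 0 = x → γ 1 = y → γ (1/2 : ℝ) ∈ B

/-- The configuration `(x, y)` is midpoint secure: it has a finite midpoint blocking set. -/
def MidpointSecure {X : Type*} [MetricSpace X] (x y : X) : Prop :=
  ∃ B : Set X, B.Finite ∧ MidpointBlocks x y B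


private lemma l2dist_aux {X Y : Type*} [MetricSpace X] [MetricSpace Y]
    (f g : WithLp 2 (X × Y)) :
    dist f g = Real.sqrt (dist f.fst g.fst ^ 2 + dist f.snd g.snd ^ 2) := by
  rw [WithLp.prod_dist_eq_add (by norm_num), Real.sqrt_eq_rpow]
  norm_num

private lemma prod_geodesic_aux {X Y : Type*} [MetricSpace X] [MetricSpace Y]
    {γ : ℝ → X} {σ : ℝ → Y} (hγ : IsGeodesic γ) (hσ : IsGeodesic σ) :
    IsGeodesic (fun t => (WithLp.equiv 2 (X × Y)).symm (γ t, σ t)) := by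
  obtain ⟨L, hL, hγ⟩ := hγ
  obtain ⟨M, hM, hσ⟩ := hσ
  have hpos : (0:ℝ) < Real.sqrt (L ^ 2 + M ^ 2) := Real.sqrt_pos.2 (by positivity)
  refine ⟨Real.sqrt (L ^ 2 + M ^ 2), hpos, fun t ht => ?_⟩
  obtain ⟨U, hU, hUd⟩ := hγ t ht
  obtain ⟨V, hV, hVd⟩ := hσ t ht
  refine ⟨U ∩ V, Filter.inter_mem hU hV, fun s hs s' hs' => ?_⟩
  have h1 := hUd s ⟨hs.1.1, hs.2⟩ s' ⟨hs'.1.1, hs'.2⟩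
  have h2 := hVd s ⟨hs.1.2, hs.2⟩ s' ⟨hs'.1.2, hs'.2⟩
  rw [l2dist_aux]
  simp only [WithLp.equiv_symm_apply, WithLp.toLp_fst, WithLp.toLp_snd]
  rw [h1, h2, mul_pow, mul_pow, ← add_mul, Real.sqrt_mul (by positivity),
    Real.sqrt_sq_eq_abs, abs_abs]

/-- If `Y` contains an infinite family of geodesic loops at `p` whose only interior
intersections and whose only passages through a common point occur at `q`, reached
exactly at time `1/2`, then security of `((x,p),(y,p))` in the ℓ² product forces
midpoint security of `(x,y)` in `X`, with midpoint blocking set `π₁(B)`. -/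
theorem stmt9 {X Y : Type*} [MetricSpace X] [MetricSpace Y] (p q : Y)
    (σ : ℕ → ℝ → Y)
    (hσgeo : ∀ i, IsGeodesic (σ i))
    (hσjoin : ∀ i, σ i 0 = p ∧ σ i 1 = p)
    (ha : ∀ i, ∀ t ∈ Set.Ioo (0:ℝ) 1, (σ i t = q ↔ t = 1/2))
    (hb : ∀ i j, i ≠ j → ∀ s ∈ Set.Ioo (0:ℝ) 1, ∀ t ∈ Set.Ioo (0:ℝ) 1,
      σ i s = σ j t → σ i s = q)
    (x y : X) (B : Set (WithLp 2 (X × Y))) (hBfin : B.Finite)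
    (hB : Blocks ((WithLp.equiv 2 (X × Y)).symm (x, p))
      ((WithLp.equiv 2 (X × Y)).symm (y, p)) B) :
    MidpointSecure x y ∧
    MidpointBlocks x y ((fun z => (WithLp.equiv 2 (X × Y) z).1) '' B) := by
  have hmb : MidpointBlocks x y ((fun z => (WithLp.equiv 2 (X × Y) z).1) '' B) := by
    intro γ hγ h0 h1
    set Γ : ℕ → ℝ → WithLp 2 (X × Y) :=
      fun i t => (WithLp.equiv 2 (X × Y)).symm (γ t, σ i t) with hΓ
    have hblk : ∀ i, ∃ t ∈ Set.Ioo (0:ℝ) 1, Γ i t ∈ B := by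
      intro i
      exact hB (Γ i) (prod_geodesic_aux hγ (hσgeo i))
        (by simp [hΓ, h0, (hσjoin i).1]) (by simp [hΓ, h1, (hσjoin i).2])
    choose τ hτmem hτB using hblk
    haveI : Finite ↥B := hBfin
    obtain ⟨i, j, hij, hEq⟩ :=
      Finite.exists_ne_map_eq_of_infinite (fun i : ℕ => (⟨Γ i (τ i), hτB i⟩ : ↥B))
    have hEq' : Γ i (τ i) = Γ j (τ j) := congrArg Subtype.val hEq
    have hfst : γ (τ i) = γ (τ j) := congrArg (fun z => (WithLp.equiv 2 (X × Y) z).1) hEq'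
    have hsnd : σ i (τ i) = σ j (τ j) := congrArg (fun z => (WithLp.equiv 2 (X × Y) z).2) hEq'
    have hq : σ i (τ i) = q := hb i j hij _ (hτmem i) _ (hτmem j) hsnd
    have hti : τ i = 1/2 := (ha i _ (hτmem i)).1 hq
    refine ⟨Γ i (τ i), hτB i, ?_⟩
    simp [hΓ, hti]
  exact ⟨⟨_, hBfin.image _, hmb⟩, hmb⟩
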